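/- Let K be a compact subset of [0,1]^d. Then for any β' > β ≥ 0, there exists a finite simplicial complex (equivalently, a compact triangulable space) L with K^β ⊆ L ⊆ K^{β'}, and consequently the map on singular homology H_s(K^β) → H_s(K^{β'}) induced by inclusion has finite rank for every s. -/

import Mathlib

open CategoryTheory Metric

namespace KuhnAux

variable {d : ℕ}

local notation "E" => EuclideanSpace ℝ (Fin d)

/-- pointwise order -/
def le' (x y : E) : Prop := ∀ i, x i ≤ y i

lemma le'_refl (x : E) : le' x x := fun _ => le_rfl
lemma le'_trans {x y z : E} (h1 : le' x y) (h2 : le' y z) : le' x z := fun i => (h1 i).trans (h2 i)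
lemma le'_antisymm {x y : E} (h1 : le' x y) (h2 : le' y x) : x = y :=
  PiLp.ext fun i => le_antisymm (h1 i) (h2 i)

def IsGrid (h : ℝ) (x : E) : Prop := ∀ i, ∃ z : ℤ, x i = h * z

structure IsKuhn (h : ℝ) (s : Finset E) : Prop where
  grid : ∀ x ∈ s, IsGrid h x
  chain : ∀ x ∈ s, ∀ y ∈ s, le' x y ∨ le' y x
  diam : ∀ x ∈ s, ∀ y ∈ s, ∀ i, |x i - y i| ≤ h

section chain

/-- a finite nonempty chain has a greatest element -/
lemma exists_greatest (s : Finset E) (hne : s.Nonempty)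
    (hc : ∀ x ∈ s, ∀ y ∈ s, le' x y ∨ le' y x) :
    ∃ y ∈ s, ∀ z ∈ s, le' z y := by
  classical
  induction s using Finset.induction_on with
  | empty => exact absurd hne (by simp)
  | @insert a s ha ih =>
    rcases s.eq_empty_or_nonempty with rfl | hs
    · exact ⟨a, by simp, by simpa using le'_refl a⟩
    · obtain ⟨y, hy, hgy⟩ := ih hs (fun x hx y hy => hc x (Finset.mem_insert_of_mem hx) y
        (Finset.mem_insert_of_mem hy))
      rcases hc a (Finset.mem_insert_self a s) y (Finset.mem_insert_of_mem hy) with h | h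
      · exact ⟨y, Finset.mem_insert_of_mem hy, fun z hz => by
          rcases Finset.mem_insert.1 hz with rfl | hz
          · exact h
          · exact hgy z hz⟩
      · exact ⟨a, Finset.mem_insert_self a s, fun z hz => by
          rcases Finset.mem_insert.1 hz with rfl | hz
          · exact le'_refl _
          · exact le'_trans (hgy z hz) h⟩

lemma exists_least (s : Finset E) (hne : s.Nonempty)
    (hc : ∀ x ∈ s, ∀ y ∈ s, le' x y ∨ le' y x) :
    ∃ y ∈ s, ∀ z ∈ s, le' y z := by
  classical
  induction s using Finset.induction_on with
  | empty => exact absurd hne (by simp)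
  | @insert a s ha ih =>
    rcases s.eq_empty_or_nonempty with rfl | hs
    · exact ⟨a, by simp, by simpa using le'_refl a⟩
    · obtain ⟨y, hy, hgy⟩ := ih hs (fun x hx y hy => hc x (Finset.mem_insert_of_mem hx) y
        (Finset.mem_insert_of_mem hy))
      rcases hc a (Finset.mem_insert_self a s) y (Finset.mem_insert_of_mem hy) with h | h
      · exact ⟨a, Finset.mem_insert_self a s, fun z hz => by
          rcases Finset.mem_insert.1 hz with rfl | hz
          · exact le'_refl _
          · exact le'_trans h (hgy z hz)⟩
      · exact ⟨y, Finset.mem_insert_of_mem hy, fun z hz => by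
          rcases Finset.mem_insert.1 hz with rfl | hz
          · exact h
          · exact hgy z hz⟩

end chain

/-- grid step: two comparable grid points at distance ≤ h differ by 0 or h in each coord -/
lemma grid_step {h : ℝ} (hh : 0 < h) {x y : E} (hx : IsGrid h x) (hy : IsGrid h y)
    (hd : ∀ i, |x i - y i| ≤ h) (hle : le' x y) (i : Fin d) : y i = x i ∨ y i = x i + h := by
  obtain ⟨zx, hzx⟩ := hx i
  obtain ⟨zy, hzy⟩ := hy i
  have h1 : (0:ℝ) ≤ h * (zy - zx) := by
    have := hle i; rw [hzx, hzy] at this; nlinarith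
  have h2 : h * (zy - zx) ≤ h := by
    have := hd i; rw [hzx, hzy, abs_le] at this; nlinarith [this.2]
  have hr1 : (0:ℝ) ≤ (zy:ℝ) - zx := by nlinarith
  have hr2 : ((zy:ℝ) - zx) ≤ 1 := by nlinarith
  have hz1 : (0:ℤ) ≤ zy - zx := by exact_mod_cast (by push_cast; linarith : (0:ℝ) ≤ ((zy - zx : ℤ):ℝ))
  have hz2 : zy - zx ≤ 1 := by exact_mod_cast (by push_cast; linarith : ((zy - zx : ℤ):ℝ) ≤ 1)
  rcases (by omega : zy = zx ∨ zy = zx + 1) with hc | hc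
  · left; rw [hzy, hzx, hc]
  · right; rw [hzy, hzx, hc]; push_cast; ring

lemma sum_coord {α : Type*} (s : Finset α) (F : α → E) (i : Fin d) :
    (∑ a ∈ s, F a) i = ∑ a ∈ s, F a i := by
  classical
  induction s using Finset.induction_on with
  | empty => rfl
  | @insert a s ha ih => rw [Finset.sum_insert ha, Finset.sum_insert ha, ← ih]; rfl

end KuhnAux

namespace KuhnAux

variable {d : ℕ}
local notation "E" => EuclideanSpace ℝ (Fin d)

lemma kuhn_weights_zero {h : ℝ} (hh : 0 < h) {s : Finset E} (hs : IsKuhn h s) (W : E → ℝ)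
    (hw0 : ∑ y ∈ s, W y = 0) (hw1 : ∑ y ∈ s, W y • y = 0) : ∀ y ∈ s, W y = 0 := by
  classical
  rcases s.eq_empty_or_nonempty with rfl | hne
  · simp
  obtain ⟨q, hq, hql⟩ := exists_least s hne hs.chain
  have step : ∀ y ∈ s, ∀ i, y i = q i ∨ y i = q i + h := fun y hy i =>
    grid_step hh (hs.grid q hq) (hs.grid y hy) (fun i => hs.diam q hq y hy i) (hql y hy) i
  have coordSum : ∀ i, ∑ y ∈ s, W y * y i = 0 := by
    intro i
    have h0 : (∑ y ∈ s, W y • y) i = (0 : ℝ) := by rw [hw1]; rfl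
    rw [sum_coord] at h0
    simpa [PiLp.smul_apply, smul_eq_mul] using h0
  have upsum : ∀ i, ∑ y ∈ s.filter (fun z => z i = q i + h), W y = 0 := by
    intro i
    have e1 : ∀ y ∈ s, W y * y i = W y * q i + (if y i = q i + h then W y * h else 0) := by
      intro y hy
      rcases step y hy i with hc | hc
      · rw [if_neg (by rw [hc]; intro hcon; linarith), hc]; ring
      · rw [if_pos hc, hc]; ring
    have e2 : ∑ y ∈ s, W y * y i
        = (∑ y ∈ s, W y) * q i + (∑ y ∈ s.filter (fun z => z i = q i + h), W y) * h := by
      rw [Finset.sum_congr rfl e1, Finset.sum_add_distrib, Finset.sum_ite, Finset.sum_const_zero,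
        add_zero, ← Finset.sum_mul, ← Finset.sum_mul]
    rw [coordSum i, hw0] at e2
    rw [zero_mul, zero_add] at e2
    exact (mul_eq_zero.1 e2.symm).resolve_right (ne_of_gt hh)
  have upset_eq : ∀ y ∈ s, ∑ z ∈ s.filter (fun z => le' y z), W z = 0 := by
    intro y hy
    by_cases hyq : le' y q
    · have : s.filter (fun z => le' y z) = s :=
        Finset.filter_true_of_mem (fun z hz => le'_trans hyq (hql z hz))
      rw [this]; exact hw0
    · set D := s.filter (fun z => le' z y ∧ z ≠ y) with hD
      have hqD : q ∈ D := by
        refine Finset.mem_filter.2 ⟨hq, hql y hy, ?_⟩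
        intro hcon; rw [hcon] at hyq; exact hyq (le'_refl y)
      obtain ⟨p, hpD, hpg⟩ := exists_greatest D ⟨q, hqD⟩
        (fun a ha b hb => hs.chain a (Finset.mem_filter.1 ha).1 b (Finset.mem_filter.1 hb).1)
      obtain ⟨hps, hpy, hpney⟩ : p ∈ s ∧ le' p y ∧ p ≠ y := by
        have := Finset.mem_filter.1 hpD; exact ⟨this.1, this.2.1, this.2.2⟩
      obtain ⟨i, hilt⟩ : ∃ i, p i < y i := by
        by_contra hcon
        push_neg at hcon
        exact hpney (le'_antisymm hpy (fun i => hcon i))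
      have hyi : y i = q i + h := by
        rcases step y hy i with hc | hc
        · exfalso; have hq1 := hql p hps i; rw [hc] at hilt; linarith
        · exact hc
      have hpi : p i = q i := by
        rcases step p hps i with hc | hc
        · exact hc
        · exfalso; rw [hc, hyi] at hilt; linarith
      have filterEq : s.filter (fun z => z i = q i + h) = s.filter (fun z => le' y z) := by
        ext z
        simp only [Finset.mem_filter]
        constructor
        · rintro ⟨hzs, hzi⟩
          refine ⟨hzs, ?_⟩
          rcases hs.chain y hy z hzs with hc | hc
          · exact hc
          · by_cases hzy : z = y
            · rw [hzy]; exact le'_refl y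
            · exfalso
              have hzD : z ∈ D := Finset.mem_filter.2 ⟨hzs, hc, hzy⟩
              have := hpg z hzD i
              rw [hpi] at this
              rw [hzi] at this
              linarith
        · rintro ⟨hzs, hzy⟩
          refine ⟨hzs, ?_⟩
          have h1 : q i + h ≤ z i := by rw [← hyi]; exact hzy i
          rcases step z hzs i with hc | hc
          · exfalso; rw [hc] at h1; linarith
          · exact hc
      rw [← filterEq]
      exact upsum i
  intro y hy
  set A := s.filter (fun z => le' y z) with hA
  have hyA : y ∈ A := Finset.mem_filter.2 ⟨hy, le'_refl y⟩
  have hAsum : W y + ∑ z ∈ A.erase y, W z = ∑ z ∈ A, W z := Finset.add_sum_erase A W hyA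
  have hBsum : ∑ z ∈ A.erase y, W z = 0 := by
    rcases (A.erase y).eq_empty_or_nonempty with hB | hB
    · rw [hB]; simp
    · obtain ⟨p, hpB, hpl⟩ := exists_least (A.erase y) hB (fun a ha b hb =>
        hs.chain a (Finset.mem_filter.1 (Finset.mem_of_mem_erase ha)).1 b
          (Finset.mem_filter.1 (Finset.mem_of_mem_erase hb)).1)
      have hpA := Finset.mem_of_mem_erase hpB
      have hpf := Finset.mem_filter.1 hpA
      have hBeq : A.erase y = s.filter (fun z => le' p z) := by
        ext z
        constructor
        · intro hz
          exact Finset.mem_filter.2 ⟨(Finset.mem_filter.1 (Finset.mem_of_mem_erase hz)).1, hpl z hz⟩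
        · intro hz
          have hzf := Finset.mem_filter.1 hz
          refine Finset.mem_erase.2 ⟨?_, Finset.mem_filter.2 ⟨hzf.1, le'_trans hpf.2 hzf.2⟩⟩
          intro hcon
          have h1 : le' p y := by rw [← hcon]; exact hzf.2
          have h2 : p = y := le'_antisymm h1 hpf.2
          exact (Finset.mem_erase.1 hpB).1 h2
      rw [hBeq]
      exact upset_eq p hpf.1
  have := upset_eq y hy
  rw [← hA] at this
  rw [hBsum, add_zero] at hAsum
  rw [hAsum]
  exact this

end KuhnAux

namespace KuhnAux

variable {d : ℕ}
local notation "E" => EuclideanSpace ℝ (Fin d)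

lemma kuhn_affineIndependent {h : ℝ} (hh : 0 < h) {s : Finset E} (hs : IsKuhn h s) :
    AffineIndependent ℝ ((↑) : s → E) := by
  classical
  rw [affineIndependent_iff]
  intro t w hw0 hw1
  set W : E → ℝ := fun y => if hy : y ∈ s then (if ⟨y, hy⟩ ∈ t then w ⟨y, hy⟩ else 0) else 0
    with hW
  have hWe : ∀ e : {x // x ∈ s}, W ↑e = if e ∈ t then w e else 0 := by
    intro e
    rw [hW]
    simp only [e.2, dif_pos, Subtype.coe_eta]
  have hsum1 : ∑ y ∈ s, W y = ∑ e ∈ t, w e := by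
    rw [← Finset.sum_attach s W]
    rw [Finset.sum_congr rfl (fun e _ => hWe e)]
    rw [Finset.sum_ite_mem]
    congr 1
    ext e
    simp [Finset.mem_attach]
  have hsum2 : ∑ y ∈ s, W y • y = ∑ e ∈ t, w e • (e : E) := by
    rw [← Finset.sum_attach s (fun y => W y • y)]
    have : ∀ e ∈ s.attach, W ↑e • (e : E) = if e ∈ t then w e • (e : E) else 0 := by
      intro e _
      rw [hWe e]
      split_ifs <;> simp
    rw [Finset.sum_congr rfl this, Finset.sum_ite_mem]
    congr 1
    ext e
    simp [Finset.mem_attach]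
  have key : ∀ y ∈ s, W y = 0 :=
    kuhn_weights_zero hh hs W (by rw [hsum1]; exact hw0) (by rw [hsum2]; exact hw1)
  intro e he
  have := key ↑e e.2
  rw [hWe e, if_pos he] at this
  exact this

end KuhnAux

namespace KuhnAux

variable {d : ℕ}
local notation "E" => EuclideanSpace ℝ (Fin d)

noncomputable def cVert (h : ℝ) (x : E) (t : ℝ) : E :=
  WithLp.toLp 2 (fun i => h * ⌊x i / h⌋ + (if t ≤ x i / h - ⌊x i / h⌋ then h else 0))

lemma cVert_apply (h : ℝ) (x : E) (t : ℝ) (i : Fin d) :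
    cVert h x t i = h * ⌊x i / h⌋ + (if t ≤ x i / h - ⌊x i / h⌋ then h else 0) := rfl

/-- the carrier of a point: the vertex set of the minimal Kuhn face containing it -/
def Carrier (h : ℝ) (x : E) : Set (EuclideanSpace ℝ (Fin d)) :=
  {v | ∃ t : ℝ, 0 < t ∧ t ≤ 1 ∧ v = cVert h x t}

lemma core_mem : ∀ (n : ℕ) (f : E), (∀ i, 0 ≤ f i) → (∀ i, f i < 1) →
    ((Finset.univ.image (fun i => f i)).filter (fun a => 0 < a)).card ≤ n →
    f ∈ convexHull ℝ {g : E | ∃ t : ℝ, 0 < t ∧ t ≤ 1 ∧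
      g = fun i => if t ≤ f i then (1:ℝ) else 0} := by
  classical
  intro n
  induction n with
  | zero =>
    intro f h0 h1 hcard
    have hz : ∀ i, f i = 0 := by
      intro i
      by_contra hcon
      have hpos : 0 < f i := lt_of_le_of_ne (h0 i) (Ne.symm hcon)
      have : f i ∈ (Finset.univ.image (fun i => f i)).filter (fun a => 0 < a) :=
        Finset.mem_filter.2 ⟨Finset.mem_image.2 ⟨i, Finset.mem_univ i, rfl⟩, hpos⟩
      have := Finset.card_pos.2 ⟨_, this⟩
      omega
    refine subset_convexHull ℝ _ ⟨1, one_pos, le_rfl, ?_⟩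
    funext i
    rw [hz i, if_neg (by norm_num)]
  | succ n ih =>
    intro f h0 h1 hcard
    by_cases hz : ∀ i, f i = 0
    · refine subset_convexHull ℝ _ ⟨1, one_pos, le_rfl, ?_⟩
      funext i
      rw [hz i, if_neg (by norm_num)]
    · push_neg at hz
      obtain ⟨i₀, hi₀⟩ := hz
      set P := (Finset.univ.image (fun i => f i)).filter (fun a => 0 < a) with hP
      have hPne : P.Nonempty :=
        ⟨f i₀, Finset.mem_filter.2 ⟨Finset.mem_image.2 ⟨i₀, Finset.mem_univ i₀, rfl⟩,
          lt_of_le_of_ne (h0 i₀) (Ne.symm hi₀)⟩⟩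
      set τ := P.min' hPne with hτ
      have hτP : τ ∈ P := P.min'_mem hPne
      have hτpos : 0 < τ := (Finset.mem_filter.1 hτP).2
      have hτlt1 : τ < 1 := by
        obtain ⟨i, _, hi⟩ := Finset.mem_image.1 (Finset.mem_filter.1 hτP).1
        rw [← hi]; exact h1 i
      have h1τ : 0 < 1 - τ := by linarith
      have hτle : ∀ i, 0 < f i → τ ≤ f i := fun i hi =>
        P.min'_le _ (Finset.mem_filter.2 ⟨Finset.mem_image.2 ⟨i, Finset.mem_univ i, rfl⟩, hi⟩)
      set f' : EuclideanSpace ℝ (Fin d) :=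
        WithLp.toLp 2 (fun i => if 0 < f i then (f i - τ)/(1-τ) else 0) with hf'
      have hf'app : ∀ i, f' i = if 0 < f i then (f i - τ)/(1-τ) else 0 := fun i => rfl
      have h0' : ∀ i, 0 ≤ f' i := by
        intro i
        rw [hf'app]
        split_ifs with hc
        · exact div_nonneg (by linarith [hτle i hc]) (le_of_lt h1τ)
        · exact le_rfl
      have h1' : ∀ i, f' i < 1 := by
        intro i
        rw [hf'app]
        split_ifs with hc
        · rw [div_lt_one h1τ]; linarith [h1 i]
        · norm_num
      have hcard' : ((Finset.univ.image (fun i => f' i)).filter (fun a => 0 < a)).card ≤ n := by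
        have hsub : (Finset.univ.image (fun i => f' i)).filter (fun a => 0 < a) ⊆
            (P.erase τ).image (fun a => (a - τ)/(1-τ)) := by
          intro b hb
          obtain ⟨hbim, hbpos⟩ := Finset.mem_filter.1 hb
          obtain ⟨i, _, hib⟩ := Finset.mem_image.1 hbim
          rw [hf'app] at hib
          by_cases hc : 0 < f i
          · rw [if_pos hc] at hib
            have hfiτ : f i ≠ τ := by
              intro hcon
              rw [hcon] at hib
              rw [← hib] at hbpos
              simp at hbpos
            exact Finset.mem_image.2 ⟨f i, Finset.mem_erase.2 ⟨hfiτ,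
              Finset.mem_filter.2 ⟨Finset.mem_image.2 ⟨i, Finset.mem_univ i, rfl⟩, hc⟩⟩, hib⟩
          · rw [if_neg hc] at hib
            rw [← hib] at hbpos
            linarith
        have h2 := Finset.card_le_card hsub
        have h3 := Finset.card_image_le (s := P.erase τ) (f := fun a => (a - τ)/(1-τ))
        have h4 := Finset.card_erase_of_mem hτP
        have h5 : 1 ≤ P.card := Finset.card_pos.2 hPne
        omega
      have hrec := ih f' h0' h1' hcard'
      have hsub2 : {g : EuclideanSpace ℝ (Fin d) | ∃ t : ℝ, 0 < t ∧ t ≤ 1 ∧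
          g = fun i => if t ≤ f' i then (1:ℝ) else 0} ⊆
          {g : EuclideanSpace ℝ (Fin d) | ∃ t : ℝ, 0 < t ∧ t ≤ 1 ∧
          g = fun i => if t ≤ f i then (1:ℝ) else 0} := by
        rintro g ⟨t, ht0, ht1, hg⟩
        refine ⟨τ + t * (1 - τ), by nlinarith, by nlinarith, ?_⟩
        rw [hg]
        funext i
        congr 1
        refine propext ⟨?_, ?_⟩
        · intro hle
          rw [hf'app] at hle
          by_cases hc : 0 < f i
          · rw [if_pos hc, le_div_iff₀ h1τ] at hle
            linarith
          · rw [if_neg hc] at hle; linarith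
        · intro hle
          rw [hf'app]
          have hc : 0 < f i := by nlinarith
          rw [if_pos hc, le_div_iff₀ h1τ]
          linarith
      set v : EuclideanSpace ℝ (Fin d) := WithLp.toLp 2 (fun i => if τ ≤ f i then (1:ℝ) else 0) with hv
      have hvapp : ∀ i, v i = if τ ≤ f i then (1:ℝ) else 0 := fun i => rfl
      have hveq : f = τ • v + (1 - τ) • f' := by
        ext i
        have happ : (τ • v + (1 - τ) • f') i = τ * v i + (1 - τ) * f' i := rfl
        rw [happ, hvapp, hf'app]
        by_cases hc : 0 < f i
        · rw [if_pos (hτle i hc), if_pos hc]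
          field_simp
          ring
        · have hfi : f i = 0 := le_antisymm (not_lt.1 hc) (h0 i)
          rw [if_neg (by rw [hfi]; intro hcon; linarith), if_neg hc, hfi]
          ring
      have hvmem : v ∈
          convexHull ℝ {g : EuclideanSpace ℝ (Fin d) | ∃ t : ℝ, 0 < t ∧ t ≤ 1 ∧
            g = fun i => if t ≤ f i then (1:ℝ) else 0} :=
        subset_convexHull ℝ _ ⟨τ, hτpos, hτlt1.le, rfl⟩
      have hf'mem := (convexHull_mono hsub2) hrec
      have hfin := (convex_convexHull ℝ _) hvmem hf'mem hτpos.le h1τ.le (by ring)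
      rwa [← hveq] at hfin

lemma mem_convexHull_carrier {h : ℝ} (hh : 0 < h) (x : E) :
    x ∈ convexHull ℝ (Carrier h x) := by
  classical
  set f : EuclideanSpace ℝ (Fin d) := WithLp.toLp 2 (fun i => x i / h - ⌊x i / h⌋) with hf
  have hfapp : ∀ i, f i = x i / h - ⌊x i / h⌋ := fun i => rfl
  have h0 : ∀ i, 0 ≤ f i := fun i => by
    rw [hfapp]; exact sub_nonneg.2 (Int.floor_le _)
  have h1 : ∀ i, f i < 1 := fun i => by
    rw [hfapp]; have := Int.lt_floor_add_one (x i / h); linarith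
  set base : EuclideanSpace ℝ (Fin d) := WithLp.toLp 2 (fun i => h * ⌊x i / h⌋) with hbase
  set φ : EuclideanSpace ℝ (Fin d) →ᵃ[ℝ] EuclideanSpace ℝ (Fin d) :=
    { toFun := fun g => base + h • g
      linear := h • LinearMap.id
      map_vadd' := by
        intro p v
        show base + h • (v + p) = h • v + (base + h • p)
        rw [smul_add]
        abel } with hφ
  have hφapp : ∀ g, φ g = base + h • g := fun g => rfl
  have hx : φ f = x := by
    ext i
    have : (φ f) i = h * ⌊x i / h⌋ + h * (x i / h - ⌊x i / h⌋) := rfl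
    rw [this]
    field_simp
    ring
  have himg : φ '' {g : EuclideanSpace ℝ (Fin d) | ∃ t : ℝ, 0 < t ∧ t ≤ 1 ∧
      g = fun i => if t ≤ f i then (1:ℝ) else 0} = Carrier h x := by
    ext v
    constructor
    · rintro ⟨g, ⟨t, ht0, ht1, hg⟩, rfl⟩
      refine ⟨t, ht0, ht1, ?_⟩
      ext i
      have hgi : g i = if t ≤ f i then (1:ℝ) else 0 := congrFun hg i
      have : (φ g) i
          = h * ⌊x i / h⌋ + h * g i := rfl
      rw [this, hgi, mul_ite, mul_one, mul_zero, cVert_apply, hfapp]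
    · rintro ⟨t, ht0, ht1, rfl⟩
      refine ⟨WithLp.toLp 2 (fun i => if t ≤ f i then (1:ℝ) else 0), ⟨t, ht0, ht1, rfl⟩, ?_⟩
      ext i
      have : (φ (WithLp.toLp 2 (fun i => if t ≤ f i then (1:ℝ) else 0))) i
          = h * ⌊x i / h⌋ + h * (if t ≤ f i then (1:ℝ) else 0) := rfl
      rw [this, mul_ite, mul_one, mul_zero, cVert_apply, hfapp]
  have hcore := core_mem (((Finset.univ.image (fun i => f i)).filter (fun a => 0 < a)).card)
    f h0 h1 le_rfl
  have := Set.mem_image_of_mem φ hcore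
  rw [AffineMap.image_convexHull, himg, hx] at this
  exact this

end KuhnAux

namespace KuhnAux

variable {d : ℕ}
local notation "E" => EuclideanSpace ℝ (Fin d)

lemma cVert_coord_aux {h : ℝ} (hh : 0 < h) {t gi qi xi : ℝ} {z : ℤ} (hq : qi = h * z)
    (hxi : xi = qi + h * gi) (hg0 : 0 ≤ gi) (hg1 : gi ≤ 1) (ht0 : 0 < t) (ht1 : t ≤ 1) :
    h * ⌊xi / h⌋ + (if t ≤ xi / h - ⌊xi / h⌋ then h else 0)
      = qi + (if t ≤ gi then h else 0) := by
  have hdiv : xi / h = (z : ℝ) + gi := by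
    rw [hxi, hq]
    field_simp
  rcases lt_or_eq_of_le hg1 with hlt | heq
  · have hfl : ⌊xi / h⌋ = z := by
      rw [hdiv, Int.floor_intCast_add, Int.floor_eq_zero_iff.2 ⟨hg0, hlt⟩, add_zero]
    rw [hfl, hdiv, hq]
    push_cast
    ring_nf
  · subst heq
    have hfl : ⌊xi / h⌋ = z + 1 := by
      rw [hdiv]
      norm_num [Int.floor_intCast_add]
    rw [hfl, hdiv, hq]
    push_cast
    rw [if_neg (by linarith), if_pos ht1]
    ring

lemma carrier_subset {h : ℝ} (hh : 0 < h) {s : Finset E} (hs : IsKuhn h s) {x : E}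
    (hx : x ∈ convexHull ℝ (s : Set E)) : Carrier h x ⊆ (s : Set (EuclideanSpace ℝ (Fin d))) := by
  classical
  rw [Finset.convexHull_eq] at hx
  obtain ⟨w, hw0, hw1, hwx⟩ := hx
  rw [Finset.centerMass_eq_of_sum_1 _ _ hw1] at hwx
  simp only [id] at hwx
  set sp := s.filter (fun y => 0 < w y) with hsp
  have hsub : sp ⊆ s := Finset.filter_subset _ _
  have hsKuhn : IsKuhn h sp :=
    ⟨fun y hy => hs.grid y (hsub hy), fun a ha b hb => hs.chain a (hsub ha) b (hsub hb),
     fun a ha b hb => hs.diam a (hsub ha) b (hsub hb)⟩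
  have hsum1 : ∑ y ∈ sp, w y = 1 := by
    rw [hsp, Finset.sum_filter_of_ne, hw1]
    intro y hy hne
    exact lt_of_le_of_ne (hw0 y hy) (Ne.symm hne)
  have hxsum : ∑ y ∈ sp, w y • y = x := by
    rw [hsp, Finset.sum_filter_of_ne, hwx]
    intro y hy hne
    refine lt_of_le_of_ne (hw0 y hy) (Ne.symm ?_)
    intro hcon
    rw [hcon] at hne
    simp at hne
  have hspne : sp.Nonempty := by
    rcases sp.eq_empty_or_nonempty with hc | hc
    · rw [hc] at hsum1; simp at hsum1
    · exact hc
  obtain ⟨q, hq, hql⟩ := exists_least sp hspne hsKuhn.chain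
  have step : ∀ y ∈ sp, ∀ i, y i = q i ∨ y i = q i + h := fun y hy i =>
    grid_step hh (hsKuhn.grid q hq) (hsKuhn.grid y hy) (fun i => hsKuhn.diam q hq y hy i)
      (hql y hy) i
  set g : Fin d → ℝ := fun i => ∑ y ∈ sp.filter (fun z => z i = q i + h), w y with hg
  have hwnn : ∀ y ∈ sp, 0 ≤ w y := fun y hy => (hw0 y (hsub hy))
  have hg0 : ∀ i, 0 ≤ g i := fun i =>
    Finset.sum_nonneg (fun y hy => hwnn y (Finset.mem_of_mem_filter _ hy))
  have hg1 : ∀ i, g i ≤ 1 := by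
    intro i
    rw [← hsum1]
    exact Finset.sum_le_sum_of_subset_of_nonneg (Finset.filter_subset _ _)
      (fun y hy _ => hwnn y hy)
  have hxq : ∀ i, x i = q i + h * g i := by
    intro i
    have hxi : x i = ∑ y ∈ sp, w y * y i := by
      rw [← hxsum, sum_coord]
      exact Finset.sum_congr rfl (fun y _ => rfl)
    have e1 : ∀ y ∈ sp, w y * y i = w y * q i + (if y i = q i + h then w y * h else 0) := by
      intro y hy
      rcases step y hy i with hc | hc
      · rw [if_neg (by rw [hc]; intro hcon; linarith), hc]; ring
      · rw [if_pos hc, hc]; ring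
    rw [hxi, Finset.sum_congr rfl e1, Finset.sum_add_distrib, Finset.sum_ite,
      Finset.sum_const_zero, add_zero, ← Finset.sum_mul, ← Finset.sum_mul, hsum1, one_mul, hg]
    ring
  rintro v ⟨t, ht0, ht1, rfl⟩
  set Lam : EuclideanSpace ℝ (Fin d) → ℝ :=
    fun y => ∑ z ∈ sp.filter (fun z => le' y z), w z with hLam
  set Q := sp.filter (fun y => t ≤ Lam y) with hQ
  have hqQ : q ∈ Q := by
    refine Finset.mem_filter.2 ⟨hq, ?_⟩
    rw [hLam]
    simp only
    rw [Finset.filter_true_of_mem (fun z hz => hql z hz), hsum1]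
    exact ht1
  obtain ⟨Y, hYQ, hYg⟩ := exists_greatest Q ⟨q, hqQ⟩ (fun a ha b hb =>
    hsKuhn.chain a (Finset.mem_of_mem_filter _ ha) b (Finset.mem_of_mem_filter _ hb))
  have hYsp : Y ∈ sp := Finset.mem_of_mem_filter _ hYQ
  have dir1 : ∀ i, Y i = q i + h → t ≤ g i := by
    intro i hYi
    have hle1 : t ≤ Lam Y := (Finset.mem_filter.1 hYQ).2
    have hle2 : Lam Y ≤ g i := by
      rw [hLam, hg]
      refine Finset.sum_le_sum_of_subset_of_nonneg ?_ (fun y hy _ =>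
        hwnn y (Finset.mem_of_mem_filter _ hy))
      intro z hz
      obtain ⟨hzsp, hzle⟩ := Finset.mem_filter.1 hz
      refine Finset.mem_filter.2 ⟨hzsp, ?_⟩
      have h1 : q i + h ≤ z i := by rw [← hYi]; exact hzle i
      rcases step z hzsp i with hc | hc
      · exfalso; rw [hc] at h1; linarith
      · exact hc
    linarith
  have dir2 : ∀ i, t ≤ g i → Y i = q i + h := by
    intro i hti
    set U := sp.filter (fun z => z i = q i + h) with hU
    have hUne : U.Nonempty := by
      rcases U.eq_empty_or_nonempty with hc | hc
      · exfalso
        rw [hg] at hti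
        simp only at hti
        rw [← hU, hc] at hti
        simp at hti
        linarith
      · exact hc
    obtain ⟨m, hmU, hml⟩ := exists_least U hUne (fun a ha b hb =>
      hsKuhn.chain a (Finset.mem_of_mem_filter _ ha) b (Finset.mem_of_mem_filter _ hb))
    have hmsp : m ∈ sp := Finset.mem_of_mem_filter _ hmU
    have hmi : m i = q i + h := (Finset.mem_filter.1 hmU).2
    have hLm : t ≤ Lam m := by
      refine le_trans hti ?_
      rw [hLam, hg]
      refine Finset.sum_le_sum_of_subset_of_nonneg ?_ (fun y hy _ =>
        hwnn y (Finset.mem_of_mem_filter _ hy))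
      intro z hz
      exact Finset.mem_filter.2 ⟨Finset.mem_of_mem_filter _ hz, hml z hz⟩
    have hmQ : m ∈ Q := Finset.mem_filter.2 ⟨hmsp, hLm⟩
    have h1 : q i + h ≤ Y i := by rw [← hmi]; exact hYg m hmQ i
    rcases step Y hYsp i with hc | hc
    · exfalso; rw [hc] at h1; linarith
    · exact hc
  have hfin : cVert h x t = Y := by
    ext i
    obtain ⟨z, hz⟩ := hsKuhn.grid q hq i
    rw [cVert_apply, cVert_coord_aux hh hz (hxq i) (hg0 i) (hg1 i) ht0 ht1]
    by_cases hc : t ≤ g i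
    · rw [if_pos hc, dir2 i hc]
    · rw [if_neg hc, add_zero]
      rcases step Y hYsp i with hc' | hc'
      · rw [hc']
      · exact absurd (dir1 i hc') hc
  rw [hfin]
  exact hsub hYsp

end KuhnAux

namespace KuhnAux

variable {d : ℕ}
local notation "E" => EuclideanSpace ℝ (Fin d)

lemma carrier_grid {h : ℝ} (x : E) {t : ℝ} : IsGrid h (cVert h x t) := by
  intro i
  rw [cVert_apply]
  split_ifs with hc
  · exact ⟨⌊x i / h⌋ + 1, by push_cast; ring⟩
  · exact ⟨⌊x i / h⌋, by push_cast; ring⟩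

lemma carrier_chain {h : ℝ} (hh : 0 ≤ h) (x : E) {t t' : ℝ} (htt : t ≤ t') :
    le' (cVert h x t') (cVert h x t) := by
  intro i
  rw [cVert_apply, cVert_apply]
  have : (if t' ≤ x i / h - ⌊x i / h⌋ then h else 0) ≤
      (if t ≤ x i / h - ⌊x i / h⌋ then h else 0) := by
    split_ifs with h1 h2
    · exact le_rfl
    · exact absurd (le_trans htt h1) h2
    · exact hh
    · exact le_rfl
  linarith

lemma carrier_diam {h : ℝ} (hh : 0 ≤ h) (x : E) {t t' : ℝ} (i : Fin d) :
    |cVert h x t i - cVert h x t' i| ≤ h := by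
  rw [cVert_apply, cVert_apply]
  have h1 : ∀ u : ℝ, (0:ℝ) ≤ (if u ≤ x i / h - ⌊x i / h⌋ then h else 0) ∧
      (if u ≤ x i / h - ⌊x i / h⌋ then h else 0) ≤ h := by
    intro u; split_ifs <;> constructor <;> linarith
  rw [abs_le]
  constructor
  · linarith [(h1 t).1, (h1 t').2]
  · linarith [(h1 t).2, (h1 t').1]

lemma carrier_close {h : ℝ} (hh : 0 < h) (x : E) {t : ℝ} (ht1 : t ≤ 1) (ht0 : 0 < t) (i : Fin d) :
    |cVert h x t i - x i| ≤ h := by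
  rw [cVert_apply]
  have hfr0 : 0 ≤ x i / h - ⌊x i / h⌋ := sub_nonneg.2 (Int.floor_le _)
  have hfr1 : x i / h - ⌊x i / h⌋ < 1 := by
    have := Int.lt_floor_add_one (x i / h); linarith
  have hxi : x i = h * (x i / h) := by field_simp
  rw [abs_le]
  split_ifs with hc
  · constructor <;> nlinarith
  · push_neg at hc
    constructor <;> nlinarith

open scoped Classical in
/-- the carrier as a finset -/
noncomputable def CarrierF (h : ℝ) (x : E) : Finset (EuclideanSpace ℝ (Fin d)) :=
  (insert (1:ℝ) ((Finset.univ.image (fun i => x i / h - ⌊x i / h⌋)).filter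
    (fun a => 0 < a))).image (cVert h x)

lemma carrierF_coe (h : ℝ) (x : E) : (CarrierF h x : Set (EuclideanSpace ℝ (Fin d)))
    = Carrier h x := by
  classical
  ext v
  simp only [CarrierF, Finset.coe_image, Set.mem_image, Finset.mem_coe, Finset.mem_insert,
    Finset.mem_filter, Finset.mem_image, Finset.mem_univ, true_and]
  constructor
  · rintro ⟨t, ht, rfl⟩
    rcases ht with rfl | ⟨⟨i, hi⟩, hpos⟩
    · exact ⟨1, one_pos, le_rfl, rfl⟩
    · refine ⟨t, hpos, ?_, rfl⟩
      rw [← hi]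
      have := Int.lt_floor_add_one (x i / h)
      linarith
  · rintro ⟨t, ht0, ht1, rfl⟩
    set T := insert (1:ℝ) ((Finset.univ.image (fun i => x i / h - ⌊x i / h⌋)).filter
      (fun a => 0 < a)) with hT
    set F := T.filter (fun a => t ≤ a) with hF
    have hFne : F.Nonempty := ⟨1, Finset.mem_filter.2 ⟨Finset.mem_insert_self _ _, ht1⟩⟩
    set t' := F.min' hFne with ht'
    have ht'F : t' ∈ F := F.min'_mem hFne
    have ht'T : t' ∈ T := (Finset.mem_filter.1 ht'F).1
    have htt' : t ≤ t' := (Finset.mem_filter.1 ht'F).2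
    have ht'T' : t' = 1 ∨ (∃ a, x a / h - ↑⌊x a / h⌋ = t') ∧ 0 < t' := by
      rcases Finset.mem_insert.1 ht'T with h1 | h2
      · exact Or.inl h1
      · obtain ⟨him, hpos⟩ := Finset.mem_filter.1 h2
        obtain ⟨a, _, ha⟩ := Finset.mem_image.1 him
        exact Or.inr ⟨⟨a, ha⟩, hpos⟩
    refine ⟨t', ht'T', ?_⟩
    ext i
    rw [cVert_apply, cVert_apply]
    congr 1
    refine if_congr ⟨?_, ?_⟩ rfl rfl
    · intro hle
      exact le_trans htt' hle
    · intro hle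
      have hmem : (x i / h - ⌊x i / h⌋) ∈ F :=
        Finset.mem_filter.2 ⟨Finset.mem_insert_of_mem (Finset.mem_filter.2
          ⟨Finset.mem_image.2 ⟨i, Finset.mem_univ i, rfl⟩, lt_of_lt_of_le ht0 hle⟩), hle⟩
      exact F.min'_le _ hmem

end KuhnAux

namespace KuhnAux

variable {d : ℕ}
local notation "E" => EuclideanSpace ℝ (Fin d)

lemma carrierF_kuhn {h : ℝ} (hh : 0 < h) (x : E) : IsKuhn h (CarrierF h x) := by
  constructor
  · intro y hy
    have : y ∈ Carrier h x := by rw [← carrierF_coe]; exact hy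
    obtain ⟨t, _, _, rfl⟩ := this
    exact carrier_grid x
  · intro a ha b hb
    have ha' : a ∈ Carrier h x := by rw [← carrierF_coe]; exact ha
    have hb' : b ∈ Carrier h x := by rw [← carrierF_coe]; exact hb
    obtain ⟨t, _, _, rfl⟩ := ha'
    obtain ⟨t', _, _, rfl⟩ := hb'
    rcases le_total t t' with hc | hc
    · exact Or.inr (carrier_chain hh.le x hc)
    · exact Or.inl (carrier_chain hh.le x hc)
  · intro a ha b hb i
    have ha' : a ∈ Carrier h x := by rw [← carrierF_coe]; exact ha
    have hb' : b ∈ Carrier h x := by rw [← carrierF_coe]; exact hb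
    obtain ⟨t, _, _, rfl⟩ := ha'
    obtain ⟨t', _, _, rfl⟩ := hb'
    exact carrier_diam hh.le x i

lemma carrierF_nonempty {h : ℝ} (hh : 0 < h) (x : E) : (CarrierF h x).Nonempty := by
  have : cVert h x 1 ∈ Carrier h x := ⟨1, one_pos, le_rfl, rfl⟩
  rw [← carrierF_coe] at this
  exact ⟨_, this⟩

lemma convex_box (x : E) (h : ℝ) : Convex ℝ {y : E | ∀ i, |y i - x i| ≤ h} := by
  have heq : {y : E | ∀ i, |y i - x i| ≤ h}
      = ⋂ i, ((EuclideanSpace.projₗ (𝕜 := ℝ) i) ⁻¹' Set.Icc (x i - h) (x i + h)) := by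
    ext y
    simp only [Set.mem_setOf_eq, Set.mem_iInter, Set.mem_preimage, Set.mem_Icc]
    constructor
    · intro hy i
      have := hy i
      rw [abs_le] at this
      constructor
      · have h1 := this.1
        show x i - h ≤ y i
        linarith
      · have h2 := this.2
        show y i ≤ x i + h
        linarith
    · intro hy i
      rw [abs_le]
      obtain ⟨h1, h2⟩ := hy i
      have h1' : x i - h ≤ y i := h1
      have h2' : y i ≤ x i + h := h2
      constructor <;> linarith
  rw [heq]
  exact convex_iInter (fun i => (convex_Icc _ _).linear_preimage _)

lemma hull_carrier_box {h : ℝ} (hh : 0 < h) (x : E) :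
    convexHull ℝ (Carrier h x) ⊆ {y : E | ∀ i, |y i - x i| ≤ h} := by
  refine convexHull_min ?_ (convex_box x h)
  rintro v ⟨t, ht0, ht1, rfl⟩ i
  exact carrier_close hh x ht1 ht0 i

lemma box_dist {h : ℝ} (hh : 0 ≤ h) {x y : E} (hy : ∀ i, |y i - x i| ≤ h) :
    dist y x ≤ Real.sqrt d * h := by
  rw [EuclideanSpace.dist_eq]
  have h1 : ∑ i, dist (y i) (x i) ^ 2 ≤ ∑ _i : Fin d, h ^ 2 := by
    refine Finset.sum_le_sum (fun i _ => ?_)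
    rw [Real.dist_eq]
    have := hy i
    nlinarith [abs_nonneg (y i - x i)]
  have h2 : ∑ _i : Fin d, h ^ 2 = d * h ^ 2 := by
    rw [Finset.sum_const, Finset.card_univ, Fintype.card_fin, nsmul_eq_mul]
  calc Real.sqrt (∑ i, dist (y i) (x i) ^ 2) ≤ Real.sqrt (d * h ^ 2) := by
        refine Real.sqrt_le_sqrt ?_
        rw [← h2]; exact h1
    _ = Real.sqrt d * h := by
        rw [Real.sqrt_mul (by positivity), Real.sqrt_sq hh]

open Geometry in
/-- the Kuhn complex: all Kuhn faces at scale `h` whose hull is contained in `A` -/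
noncomputable def kuhnComplex (h : ℝ) (hh : 0 < h) (A : Set (EuclideanSpace ℝ (Fin d))) :
    SimplicialComplex ℝ (EuclideanSpace ℝ (Fin d)) where
  faces := {s | s.Nonempty ∧ IsKuhn h s ∧ convexHull ℝ ↑s ⊆ A}
  isRelLowerSet_faces := by
    rintro s ⟨hne, hk, hsub⟩
    refine ⟨hne, fun t hts htne => ?_⟩
    refine ⟨htne,
      ⟨fun y hy => hk.grid y (hts hy), fun a ha b hb => hk.chain a (hts ha) b (hts hb),
       fun a ha b hb => hk.diam a (hts ha) b (hts hb)⟩, ?_⟩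
    exact (convexHull_mono (Finset.coe_subset.2 hts)).trans hsub
  indep := fun {s} hs => kuhn_affineIndependent hh hs.2.1
  inter_subset_convexHull := by
    classical
    rintro s t ⟨_, hks, _⟩ ⟨_, hkt, _⟩ x ⟨hxs, hxt⟩
    have h1 : Carrier h x ⊆ ↑s := carrier_subset hh hks hxs
    have h2 : Carrier h x ⊆ ↑t := carrier_subset hh hkt hxt
    have h3 : Carrier h x ⊆ (↑s ∩ ↑t : Set (EuclideanSpace ℝ (Fin d))) := Set.subset_inter h1 h2
    exact convexHull_mono h3 (mem_convexHull_carrier hh x)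

lemma kuhnComplex_space_subset {h : ℝ} (hh : 0 < h) (A : Set (EuclideanSpace ℝ (Fin d))) :
    (kuhnComplex h hh A).space ⊆ A := by
  refine Set.iUnion₂_subset ?_
  rintro s ⟨_, _, hsub⟩
  exact hsub

lemma kuhnComplex_faces_finite {h : ℝ} (hh : 0 < h) {A : Set (EuclideanSpace ℝ (Fin d))}
    {R : ℝ} (hA : A ⊆ Metric.closedBall (0 : EuclideanSpace ℝ (Fin d)) R) :
    (kuhnComplex h hh A).faces.Finite := by
  classical
  set V : Set (EuclideanSpace ℝ (Fin d)) :=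
    {v | IsGrid h v ∧ v ∈ Metric.closedBall (0 : EuclideanSpace ℝ (Fin d)) R} with hV
  have hVfin : V.Finite := by
    set F : EuclideanSpace ℝ (Fin d) → (Fin d → ℤ) := fun v i => ⌊v i / h⌋ with hF
    have hrec : ∀ v ∈ V, ∀ i, v i = h * F v i := by
      rintro v ⟨hvg, _⟩ i
      obtain ⟨z, hz⟩ := hvg i
      have : v i / h = (z : ℝ) := by rw [hz]; field_simp
      rw [hF]
      simp only
      rw [this, Int.floor_intCast, hz]
    have hinj : Set.InjOn F V := by
      intro a ha b hb hab
      ext i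
      rw [hrec a ha i, hrec b hb i, hab]
    have habs : ∀ v : EuclideanSpace ℝ (Fin d), ∀ i,
        |v i| ≤ dist v (0 : EuclideanSpace ℝ (Fin d)) := by
      intro v i
      rw [EuclideanSpace.dist_eq]
      have h0 : ((0 : EuclideanSpace ℝ (Fin d)) i) = 0 := rfl
      have he : |v i| = Real.sqrt (dist (v i) ((0 : EuclideanSpace ℝ (Fin d)) i) ^ 2) := by
        rw [h0, Real.dist_eq, sub_zero, Real.sqrt_sq_eq_abs, abs_abs]
      rw [he]
      apply Real.sqrt_le_sqrt
      exact Finset.single_le_sum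
        (f := fun j => dist (v j) ((0 : EuclideanSpace ℝ (Fin d)) j) ^ 2)
        (fun j _ => by positivity) (Finset.mem_univ i)
    have himg : F '' V ⊆ Set.pi Set.univ
        (fun _i : Fin d => ((Finset.Icc ⌈-(R/h)⌉ ⌊R/h⌋ : Finset ℤ) : Set ℤ)) := by
      rintro _ ⟨v, hv, rfl⟩
      intro i _
      obtain ⟨hvg, hvB⟩ := hv
      have hcoord : |v i| ≤ R := le_trans (habs v i) (Metric.mem_closedBall.1 hvB)
      rw [abs_le] at hcoord
      have hfr : (F v i : ℝ) = v i / h := by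
        rw [hrec v ⟨hvg, hvB⟩ i]
        field_simp
      simp only [Finset.coe_Icc, Set.mem_Icc]
      constructor
      · rw [Int.ceil_le, hfr, le_div_iff₀ hh]
        have he2 : -(R/h) * h = -R := by field_simp
        rw [he2]
        exact hcoord.1
      · rw [Int.le_floor, hfr, div_le_div_iff₀ hh hh]
        nlinarith [hcoord.2]
    have hpifin : (Set.pi Set.univ
        (fun _i : Fin d => ((Finset.Icc ⌈-(R/h)⌉ ⌊R/h⌋ : Finset ℤ) : Set ℤ))).Finite :=
      Set.Finite.pi (fun _ => Finset.finite_toSet _)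
    exact Set.Finite.of_finite_image (hpifin.subset himg) hinj
  refine Set.Finite.of_finite_image (f := ((↑) : Finset (EuclideanSpace ℝ (Fin d)) →
      Set (EuclideanSpace ℝ (Fin d)))) ?_ (Finset.coe_injective.injOn)
  refine Set.Finite.subset hVfin.finite_subsets ?_
  rintro _ ⟨s, ⟨hne, hk, hsub⟩, rfl⟩
  intro y hy
  exact ⟨hk.grid y hy, hA (hsub (subset_convexHull ℝ _ hy))⟩

end KuhnAux

namespace KuhnAux

variable {d : ℕ}

lemma kuhnComplex_covers {h : ℝ} (hh : 0 < h) {A : Set (EuclideanSpace ℝ (Fin d))}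
    {x : EuclideanSpace ℝ (Fin d)} (hx : convexHull ℝ (Carrier h x) ⊆ A) :
    x ∈ (kuhnComplex h hh A).space := by
  have hface : CarrierF h x ∈ (kuhnComplex h hh A).faces :=
    ⟨carrierF_nonempty hh x, carrierF_kuhn hh x, by rw [carrierF_coe]; exact hx⟩
  have hmem : x ∈ convexHull ℝ ((CarrierF h x : Set (EuclideanSpace ℝ (Fin d)))) := by
    rw [carrierF_coe]; exact mem_convexHull_carrier hh x
  exact Set.mem_biUnion hface hmem

end KuhnAux

open KuhnAux in
theorem offset_homology_map_finite_rank_aux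
    (d : ℕ) (K : Set (EuclideanSpace ℝ (Fin d)))
    (hKc : IsCompact K) (hKne : K.Nonempty)
    (hKcube : K ⊆ {x | ∀ i, x i ∈ Set.Icc (0 : ℝ) 1})
    (β β' : ℝ) (hβ : 0 ≤ β) (hββ' : β < β') :
    (∃ L : Geometry.SimplicialComplex ℝ (EuclideanSpace ℝ (Fin d)),
        L.faces.Finite ∧
        {x | infDist x K ≤ β} ⊆ L.space ∧ L.space ⊆ {x | infDist x K ≤ β'}) ∧
    ∀ (𝕂 : Type) (_ : Field 𝕂) (H : TopCat ⥤ ModuleCat 𝕂),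
      (∀ L : Geometry.SimplicialComplex ℝ (EuclideanSpace ℝ (Fin d)), L.faces.Finite →
        FiniteDimensional 𝕂 (H.obj (TopCat.of L.space))) →
      ∀ (incl : TopCat.of {x | infDist x K ≤ β} ⟶ TopCat.of {x | infDist x K ≤ β'}),
        incl = TopCat.ofHom ⟨Set.inclusion (fun x hx => le_of_lt (lt_of_le_of_lt hx hββ')),
                continuous_inclusion _⟩ →
        FiniteDimensional 𝕂 (LinearMap.range (H.map incl).hom) := by
  classical
  set σ : ℝ := Real.sqrt d with hσ
  have hσ0 : 0 ≤ σ := Real.sqrt_nonneg _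
  set h : ℝ := (β' - β) / (σ + 1) with hhdef
  have hh : 0 < h := div_pos (by linarith) (by linarith)
  have hmul : h * (σ + 1) = β' - β := div_mul_cancel₀ _ (by linarith)
  have hσh : σ * h ≤ β' - β := by nlinarith
  set A : Set (EuclideanSpace ℝ (Fin d)) := {y | infDist y K ≤ β'} with hA
  have hAsub : ∀ x : EuclideanSpace ℝ (Fin d), infDist x K ≤ β →
      convexHull ℝ (Carrier h x) ⊆ A := by
    intro x hx y hy
    have hbox := hull_carrier_box hh x hy
    have hdist : dist y x ≤ σ * h := box_dist hh.le hbox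
    have htri : infDist y K ≤ infDist x K + dist y x := infDist_le_infDist_add_dist
    show infDist y K ≤ β'
    linarith
  obtain ⟨C, hC⟩ := hKc.isBounded.subset_closedBall (0 : EuclideanSpace ℝ (Fin d))
  have hR : A ⊆ Metric.closedBall (0 : EuclideanSpace ℝ (Fin d)) (C + (β' + 1)) := by
    intro x hx
    have hlt : infDist x K < β' + 1 := lt_of_le_of_lt hx (by linarith)
    obtain ⟨k, hkK, hk⟩ := (infDist_lt_iff hKne).1 hlt
    have h1 : dist k (0 : EuclideanSpace ℝ (Fin d)) ≤ C := Metric.mem_closedBall.1 (hC hkK)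
    have h2 : dist x (0 : EuclideanSpace ℝ (Fin d)) ≤ dist x k
        + dist k (0 : EuclideanSpace ℝ (Fin d)) := dist_triangle _ _ _
    exact Metric.mem_closedBall.2 (by linarith)
  set L := kuhnComplex h hh A with hL
  have hLfin : L.faces.Finite := kuhnComplex_faces_finite hh hR
  have hsub1 : {x | infDist x K ≤ β} ⊆ L.space := fun x hx =>
    kuhnComplex_covers hh (hAsub x hx)
  have hsub2 : L.space ⊆ {x | infDist x K ≤ β'} := kuhnComplex_space_subset hh A
  refine ⟨⟨L, hLfin, hsub1, hsub2⟩, ?_⟩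
  intro 𝕂 _ H hfin incl hincl
  haveI hfd : FiniteDimensional 𝕂 (H.obj (TopCat.of L.space)) := hfin L hLfin
  set j₁ : TopCat.of {x | infDist x K ≤ β} ⟶ TopCat.of L.space :=
    TopCat.ofHom ⟨Set.inclusion hsub1, continuous_inclusion hsub1⟩ with hj₁
  set j₂ : TopCat.of L.space ⟶ TopCat.of {x | infDist x K ≤ β'} :=
    TopCat.ofHom ⟨Set.inclusion hsub2, continuous_inclusion hsub2⟩ with hj₂
  have hcomp : incl = j₁ ≫ j₂ := by
    rw [hincl]
    rfl
  rw [hcomp, H.map_comp]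
  rw [ModuleCat.hom_comp]
  haveI : FiniteDimensional 𝕂 (LinearMap.range (H.map j₂).hom) := inferInstance
  exact Submodule.finiteDimensional_of_le (LinearMap.range_comp_le_range _ _)

/-- For a compact `K ⊆ [0,1]^d` and `0 ≤ β < β'`, there is a finite simplicial complex `L`
squeezed between the offsets `K^β ⊆ |L| ⊆ K^{β'}`; consequently the inclusion-induced map
on singular homology `H_s(K^β) → H_s(K^{β'})` has finite rank (formalized for any functor
`H` to vector spaces taking finite simplicial complexes to finite-dimensional spaces). -/
theorem offset_homology_map_finite_rank
    (d : ℕ) (K : Set (EuclideanSpace ℝ (Fin d)))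
    (hKc : IsCompact K) (hKne : K.Nonempty)
    (hKcube : K ⊆ {x | ∀ i, x i ∈ Set.Icc (0 : ℝ) 1})
    (β β' : ℝ) (hβ : 0 ≤ β) (hββ' : β < β') :
    (∃ L : Geometry.SimplicialComplex ℝ (EuclideanSpace ℝ (Fin d)),
        L.faces.Finite ∧
        {x | infDist x K ≤ β} ⊆ L.space ∧ L.space ⊆ {x | infDist x K ≤ β'}) ∧
    ∀ (𝕂 : Type) (_ : Field 𝕂) (H : TopCat ⥤ ModuleCat 𝕂),
      (∀ L : Geometry.SimplicialComplex ℝ (EuclideanSpace ℝ (Fin d)), L.faces.Finite →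
        FiniteDimensional 𝕂 (H.obj (TopCat.of L.space))) →
      ∀ (incl : TopCat.of {x | infDist x K ≤ β} ⟶ TopCat.of {x | infDist x K ≤ β'}),
        incl = TopCat.ofHom ⟨Set.inclusion (fun x hx => le_of_lt (lt_of_le_of_lt hx hββ')),
                continuous_inclusion _⟩ →
        FiniteDimensional 𝕂 (LinearMap.range (H.map incl).hom) :=
  offset_homology_map_finite_rank_aux d K hKc hKne hKcube β β' hβ hββ'
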